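/- arXiv:2103.12855 — 2 statements merged into one kernel-verified Lean document; each statement's English description precedes it below -/
import Mathlib

section
/- If f_0(n) := Σ_{k≥0} a(n,k)^2, then f_0(n) = 3 f_0(n-1) + 4 f_1(n-1) for all n ≥ 1, where f_1(n) := Σ_{k≥0} a(n,k)·a(n, k - 2^n). -/
open Polynomial

noncomputable def F (n : ℕ) : Polynomial ℤ :=
  ∏ i ∈ Finset.range n, (1 + X ^ (2 ^ i) + X ^ (2 ^ (i + 1)))

noncomputable def a (n : ℕ) (k : ℤ) : ℤ :=
  if 0 ≤ k then (F n).coeff k.toNat else 0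

noncomputable def f0 (n : ℕ) : ℤ := ∑ᶠ k : ℕ, (a n k) ^ 2

noncomputable def f1 (n : ℕ) : ℤ := ∑ᶠ k : ℕ, a n k * a n ((k : ℤ) - 2 ^ n)

lemma a_neg (n : ℕ) (k : ℤ) (hk : k < 0) : a n k = 0 := by
  simp [a, not_le.mpr hk]

lemma sum_pow : ∀ n : ℕ, ∑ i ∈ Finset.range n, 2 ^ (i + 1) = 2 ^ (n + 1) - 2
  | 0 => by simp
  | n + 1 => by
    rw [Finset.sum_range_succ, sum_pow n]
    have : 2 ≤ 2 ^ (n + 1) := Nat.one_lt_two_pow (by omega)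
    have : (2:ℕ) ^ (n + 1 + 1) = 2 ^ (n+1) + 2 ^ (n+1) := by ring
    omega

lemma F_natDegree (n : ℕ) : (F n).natDegree ≤ 2 ^ (n + 1) - 2 := by
  calc (F n).natDegree
      ≤ ∑ i ∈ Finset.range n, (1 + X ^ (2 ^ i) + X ^ (2 ^ (i + 1)) : ℤ[X]).natDegree :=
        Polynomial.natDegree_prod_le _ _
    _ ≤ ∑ i ∈ Finset.range n, 2 ^ (i + 1) := by
        apply Finset.sum_le_sum
        intro i _
        apply le_trans (Polynomial.natDegree_add_le _ _)
        simp only [Polynomial.natDegree_X_pow]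
        apply max_le _ le_rfl
        apply le_trans (Polynomial.natDegree_add_le _ _)
        simp only [Polynomial.natDegree_one, Polynomial.natDegree_X_pow]
        refine max_le (by positivity) (Nat.pow_le_pow_right (by norm_num) (by omega))
    _ = 2 ^ (n + 1) - 2 := sum_pow n

lemma a_big (n : ℕ) (k : ℤ) (hk : 2 * 2 ^ n - 1 ≤ k) : a n k = 0 := by
  have h2 : (0:ℤ) < 2 ^ n := by positivity
  rw [a, if_pos (by omega)]
  apply Polynomial.coeff_eq_zero_of_natDegree_lt
  have := F_natDegree n
  have h3 : (2:ℤ) ^ n = ((2 ^ n : ℕ) : ℤ) := by push_cast; ring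
  have h4 : (2:ℕ) ^ (n + 1) = 2 * 2 ^ n := by ring
  have h5 : 1 ≤ 2 ^ n := Nat.one_le_two_pow
  omega

lemma a_rec (m : ℕ) (k : ℤ) :
    a (m + 1) k = a m k + a m (k - 2 ^ m) + a m (k - 2 * 2 ^ m) := by
  have h2 : (0:ℤ) < 2 ^ m := by positivity
  have hcast : (2:ℤ) ^ m = ((2 ^ m : ℕ) : ℤ) := by push_cast; ring
  by_cases hk : 0 ≤ k
  · have hF : F (m + 1) = F m + F m * X ^ (2 ^ m) + F m * X ^ (2 ^ (m + 1)) := by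
      rw [F, Finset.prod_range_succ, ← F, mul_add, mul_add, mul_one]
    rw [a, if_pos hk, hF]
    simp only [Polynomial.coeff_add, Polynomial.coeff_mul_X_pow']
    congr 1
    · congr 1
      · rw [a, if_pos hk]
      · rw [a]
        split_ifs with h1 h2'
        · congr 1; omega
        · exfalso; omega
        · exfalso
          rename_i h3
          omega
        · rfl
    · have hp : (2:ℕ) ^ (m + 1) = 2 * 2 ^ m := by ring
      rw [a, hp]
      have hcast2 : ((2 * 2 ^ m : ℕ) : ℤ) = 2 * 2 ^ m := by push_cast; ring
      split_ifs with h1 h2'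
      · congr 1; omega
      · exfalso; omega
      · exfalso
        rename_i h3
        omega
      · rfl
  · rw [a_neg _ _ (by omega), a_neg _ _ (by omega), a_neg _ _ (by omega),
      a_neg _ _ (by omega)]
    ring

lemma finsum_nat_eq (g : ℕ → ℤ) (R : ℕ) (h : ∀ k, R ≤ k → g k = 0) :
    ∑ᶠ k : ℕ, g k = ∑ k ∈ Finset.range R, g k := by
  apply finsum_eq_finset_sum_of_support_subset
  intro k hk
  simp only [Function.mem_support] at hk
  simp only [Finset.coe_range, Set.mem_Iio]
  by_contra h'
  exact hk (h k (le_of_not_gt h'))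

lemma sum_shift (g : ℤ → ℤ) (hg : ∀ k : ℤ, k < 0 → g k = 0) (M R : ℕ) (hMR : M ≤ R) :
    ∑ k ∈ Finset.range R, g ((k : ℤ) - M) = ∑ k ∈ Finset.range (R - M), g k := by
  rw [Finset.range_eq_Ico, ← Finset.sum_Ico_consecutive _ (Nat.zero_le M) hMR]
  have h1 : ∑ k ∈ Finset.Ico 0 M, g ((k : ℤ) - M) = 0 := by
    apply Finset.sum_eq_zero
    intro k hk
    simp only [Finset.mem_Ico] at hk
    exact hg _ (by push_cast; omega)
  rw [h1, zero_add, Finset.sum_Ico_eq_sum_range]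
  apply Finset.sum_congr rfl
  intro k _
  congr 1
  push_cast
  ring

theorem f0_recurrence (n : ℕ) (hn : 1 ≤ n) :
    f0 n = 3 * f0 (n - 1) + 4 * f1 (n - 1) := by
  obtain ⟨m, rfl⟩ : ∃ m, n = m + 1 := ⟨n - 1, by omega⟩
  simp only [Nat.add_sub_cancel]
  have h2 : (0:ℤ) < 2 ^ m := by positivity
  have h2n : 1 ≤ 2 ^ m := Nat.one_le_two_pow
  have hcast : (2:ℤ) ^ m = ((2 ^ m : ℕ) : ℤ) := by push_cast; ring
  set M : ℕ := 2 ^ m with hM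
  have hbig : ∀ k : ℤ, 2 * (M:ℤ) - 1 ≤ k → a m k = 0 := by
    intro k hk
    exact a_big m k (by rw [hcast]; exact_mod_cast hk)
  have hneg : ∀ k : ℤ, k < 0 → a m k = 0 := fun k hk => a_neg m k hk
  have hf0 : ∀ R : ℕ, 2 * M ≤ R + 1 → f0 m = ∑ k ∈ Finset.range R, (a m (k:ℤ)) ^ 2 := by
    intro R hR
    rw [f0]
    apply finsum_nat_eq
    intro k hk
    rw [hbig (k:ℤ) (by push_cast; omega)]
    ring
  have hf1 : ∀ R : ℕ, 2 * M ≤ R + 1 →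
      f1 m = ∑ k ∈ Finset.range R, a m (k:ℤ) * a m ((k:ℤ) - (M:ℤ)) := by
    intro R hR
    rw [f1]
    have he : ∀ k : ℕ, a m (k:ℤ) * a m ((k:ℤ) - 2 ^ m) = a m (k:ℤ) * a m ((k:ℤ) - (M:ℤ)) := by
      intro k
      rw [hcast]
    simp only [he]
    apply finsum_nat_eq
    intro k hk
    rw [hbig (k:ℤ) (by push_cast; omega)]
    ring
  have hf0n : f0 (m + 1) = ∑ k ∈ Finset.range (4 * M),
      (a m (k:ℤ) + a m ((k:ℤ) - (M:ℤ)) + a m ((k:ℤ) - 2 * (M:ℤ))) ^ 2 := by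
    rw [f0, finsum_nat_eq _ (4 * M) ?_]
    · apply Finset.sum_congr rfl
      intro k _
      rw [a_rec, hcast]
    · intro k hk
      have hk' : ((4 * M : ℕ) : ℤ) ≤ (k:ℤ) := by exact_mod_cast hk
      push_cast at hk'
      have e : (2:ℤ) ^ (m+1) = (M:ℤ) * 2 := by rw [pow_succ, hcast]
      rw [a_big (m+1) k (by rw [e]; omega)]
      ring
  rw [hf0n]
  have hexp : ∀ k ∈ Finset.range (4 * M),
      (a m (k:ℤ) + a m ((k:ℤ) - (M:ℤ)) + a m ((k:ℤ) - 2 * (M:ℤ))) ^ 2 =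
      (a m (k:ℤ))^2 + (a m ((k:ℤ) - (M:ℤ)))^2 + (a m ((k:ℤ) - 2*(M:ℤ)))^2
      + 2 * (a m (k:ℤ) * a m ((k:ℤ) - (M:ℤ)))
      + 2 * (a m ((k:ℤ) - (M:ℤ)) * a m (((k:ℤ) - (M:ℤ)) - (M:ℤ)))
      + 2 * (a m (k:ℤ) * a m ((k:ℤ) - 2*(M:ℤ))) := by
    intro k _
    have he : ((k:ℤ) - (M:ℤ)) - (M:ℤ) = (k:ℤ) - 2*(M:ℤ) := by ring
    rw [he]
    ring
  rw [Finset.sum_congr rfl hexp]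
  simp only [Finset.sum_add_distrib, ← Finset.mul_sum]
  have hA2 : ∑ k ∈ Finset.range (4 * M), (a m (k:ℤ))^2 = f0 m := (hf0 (4*M) (by omega)).symm
  have hB2 : ∑ k ∈ Finset.range (4 * M), (a m ((k:ℤ) - (M:ℤ)))^2 = f0 m := by
    rw [sum_shift (fun k => (a m k)^2)
      (fun k hk => by show (a m k)^2 = 0; rw [hneg k hk]; ring) M (4*M) (by omega)]
    rw [← hf0 (4*M - M) (by omega)]
  have hC2 : ∑ k ∈ Finset.range (4 * M), (a m ((k:ℤ) - 2*(M:ℤ)))^2 = f0 m := by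
    have he : ∀ k ∈ Finset.range (4 * M),
        (a m ((k:ℤ) - 2*(M:ℤ)))^2 = (fun j => (a m j)^2) ((k:ℤ) - ((2*M : ℕ):ℤ)) := by
      intro k _
      show _ = (a m ((k:ℤ) - ((2*M : ℕ):ℤ)))^2
      norm_cast
    rw [Finset.sum_congr rfl he,
      sum_shift (fun k => (a m k)^2)
        (fun k hk => by show (a m k)^2 = 0; rw [hneg k hk]; ring) (2*M) (4*M) (by omega)]
    rw [← hf0 (4*M - 2*M) (by omega)]
  have hAB : ∑ k ∈ Finset.range (4 * M), a m (k:ℤ) * a m ((k:ℤ) - (M:ℤ)) = f1 m :=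
    (hf1 (4*M) (by omega)).symm
  have hBC : ∑ k ∈ Finset.range (4 * M),
      a m ((k:ℤ) - (M:ℤ)) * a m (((k:ℤ) - (M:ℤ)) - (M:ℤ)) = f1 m := by
    rw [sum_shift (fun j => a m j * a m (j - (M:ℤ)))
      (fun k hk => by show a m k * a m (k - (M:ℤ)) = 0; rw [hneg k hk]; ring) M (4*M) (by omega)]
    rw [← hf1 (4*M - M) (by omega)]
  have hAC : ∑ k ∈ Finset.range (4 * M), a m (k:ℤ) * a m ((k:ℤ) - 2*(M:ℤ)) = 0 := by
    apply Finset.sum_eq_zero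
    intro k _
    by_cases hkM : (k:ℤ) < 2*(M:ℤ)
    · rw [hneg ((k:ℤ) - 2*(M:ℤ)) (by omega)]
      ring
    · rw [hbig (k:ℤ) (by omega)]
      ring
  rw [hA2, hB2, hC2, hAB, hBC, hAC]
  ring
end

section
/- For every k ≥ 2, the polynomial X^k - X^{k-1} - X^{k-2} - ... - X - 1 has a unique real root ρ with ρ > 1, and every other complex root has absolute value strictly less than 1 (i.e., the k-bonacci constant is a PV number). -/
open Complex

lemma kbon_key (k : ℕ) (hk : 1 ≤ k) {a b : ℝ} (ha : 1 ≤ a) (hab : a < b) :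
    a ^ k * ∑ j ∈ Finset.range k, b ^ j < b ^ k * ∑ j ∈ Finset.range k, a ^ j := by
  rw [Finset.mul_sum, Finset.mul_sum]
  apply Finset.sum_lt_sum_of_nonempty (Finset.nonempty_range_iff.mpr (by omega))
  intro j hj
  rw [Finset.mem_range] at hj
  have h0a : (0:ℝ) < a := lt_of_lt_of_le one_pos ha
  have h0b : (0:ℝ) < b := h0a.trans hab
  have hsa : a ^ k = a ^ j * a ^ (k - j) := by rw [← pow_add]; congr 1; omega
  have hsb : b ^ k = b ^ j * b ^ (k - j) := by rw [← pow_add]; congr 1; omega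
  rw [hsa, hsb]
  have h1 : a ^ (k - j) < b ^ (k - j) :=
    pow_lt_pow_left₀ hab h0a.le (by omega)
  nlinarith [mul_pos (pow_pos h0a j) (pow_pos h0b j), h1]

set_option maxHeartbeats 1600000 in
/-- The k-bonacci constant is a PV number: X^k - X^{k-1} - ⋯ - X - 1 has a unique
real root ρ > 1, and every other complex root has absolute value < 1. -/
theorem kbonacci_is_PV (k : ℕ) (hk : 2 ≤ k) :
    ∃ ρ : ℝ, 1 < ρ ∧ ρ ^ k = ∑ j ∈ Finset.range k, ρ ^ j ∧
      (∀ r : ℝ, 1 < r → r ^ k = ∑ j ∈ Finset.range k, r ^ j → r = ρ) ∧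
      (∀ z : ℂ, z ^ k = ∑ j ∈ Finset.range k, z ^ j → z ≠ (ρ : ℂ) → ‖z‖ < 1) := by
  -- the real function
  set S : ℝ → ℝ := fun t => t ^ k - ∑ j ∈ Finset.range k, t ^ j with hS
  have hcont : Continuous S := by fun_prop
  have hS1 : S 1 = 1 - k := by simp [hS]
  have hS2 : S 2 = 1 := by
    have h := geom_sum_mul (2:ℝ) k
    simp only [hS]
    norm_num at h ⊢
    linarith
  -- existence of ρ ∈ (1,2)
  obtain ⟨ρ, hρmem, hρ0⟩ : ∃ ρ ∈ Set.Ioo (1:ℝ) 2, S ρ = 0 := by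
    have h : Set.Ioo (S 1) (S 2) ⊆ S '' Set.Ioo 1 2 :=
      intermediate_value_Ioo (by norm_num) hcont.continuousOn
    have h0 : (0:ℝ) ∈ Set.Ioo (S 1) (S 2) := by
      rw [hS1, hS2]
      constructor
      · have : (2:ℝ) ≤ k := by exact_mod_cast hk
        linarith
      · norm_num
    obtain ⟨ρ, hmem, heq⟩ := h h0
    exact ⟨ρ, hmem, heq⟩
  obtain ⟨hρ1, hρ2lt⟩ := hρmem
  have hρeq : ρ ^ k = ∑ j ∈ Finset.range k, ρ ^ j := by
    have := hρ0; simp only [hS] at this; linarith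
  have hsumρ : (0:ℝ) < ∑ j ∈ Finset.range k, ρ ^ j := by rw [← hρeq]; positivity
  -- uniqueness
  have huniq : ∀ r : ℝ, 1 < r → r ^ k = ∑ j ∈ Finset.range k, r ^ j → r = ρ := by
    intro r hr hre
    by_contra hne
    rcases lt_or_gt_of_ne hne with h | h
    · have := kbon_key k (by omega) hr.le h
      rw [hre, hρeq] at this
      nlinarith
    · have := kbon_key k (by omega) hρ1.le h
      rw [hre, hρeq] at this
      nlinarith
  refine ⟨ρ, hρ1, hρeq, huniq, ?_⟩
  intro z hz hzρ
  by_contra hcon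
  push_neg at hcon
  set r : ℝ := ‖z‖ with hrdef
  -- |z|^k ≤ ∑ |z|^j
  have hrk : r ^ k ≤ ∑ j ∈ Finset.range k, r ^ j := by
    calc r ^ k = ‖z ^ k‖ := by rw [norm_pow]
    _ = ‖∑ j ∈ Finset.range k, z ^ j‖ := by rw [hz]
    _ ≤ ∑ j ∈ Finset.range k, ‖z ^ j‖ := norm_sum_le _ _
    _ = ∑ j ∈ Finset.range k, r ^ j := by simp [map_pow, hrdef]
  -- r ≤ ρ
  have hrρ : r ≤ ρ := by
    by_contra hgt
    push_neg at hgt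
    have := kbon_key k (by omega) hρ1.le hgt
    rw [hρeq] at this
    have hrpos : (0:ℝ) < ρ ^ k := by positivity
    nlinarith
  -- z ≠ 1
  have hz1 : z ≠ 1 := by
    intro h
    rw [h] at hz
    simp at hz
    have : ((k:ℂ)) = 1 := hz.symm
    have : (k:ℝ) = 1 := by exact_mod_cast congrArg Complex.re this
    have : (2:ℝ) ≤ k := by exact_mod_cast hk
    linarith
  -- the simplified equation z^k (2 - z) = 1
  have hzeq : z ^ k * (2 - z) = 1 := by
    have h := geom_sum_mul z k
    -- (∑ z^j) * (z - 1) = z^k - 1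
    rw [← hz] at h
    ring_nf at h ⊢
    linear_combination -h
  have habs : r ^ k * ‖2 - z‖ = 1 := by
    have := congrArg (norm : ℂ → ℝ) hzeq
    rwa [norm_mul, norm_pow, norm_one] at this
  -- trichotomy on r
  rcases eq_or_lt_of_le hcon with hr1 | hr1
  · -- r = 1 : show z = 1
    have habs2 : ‖2 - z‖ = 1 := by rw [← hr1] at habs; simpa using habs
    have hre : (‖2 - z‖)^2 = 4 - 4 * z.re + r ^ 2 := by
      rw [Complex.sq_norm, Complex.normSq_apply, hrdef, Complex.sq_norm, Complex.normSq_apply]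
      simp [Complex.sub_re, Complex.sub_im]
      ring
    rw [habs2, ← hr1] at hre
    have hzre : z.re = 1 := by nlinarith
    have hzim : z.im = 0 := by
      have := Complex.sq_norm z
      rw [← hrdef, ← hr1, Complex.normSq_apply, hzre] at this
      nlinarith
    exact hz1 (Complex.ext hzre hzim)
  · rcases eq_or_lt_of_le hrρ with hrρ' | hrρ'
    · -- r = ρ: equality case of triangle inequality forces z = ρ
      subst hrρ'
      set c : ℂ := (starRingEnd ℂ) (z ^ k) with hc
      have hcabs : ‖c‖ = r ^ k := by
        rw [hc, Complex.norm_conj, norm_pow]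
      have hck : (z ^ k * c).re = (r ^ k) ^ 2 := by
        rw [hc, Complex.mul_conj, Complex.ofReal_re, ← Complex.sq_norm, norm_pow, ← hrdef]
      have hsum : ∑ j ∈ Finset.range k, (c * z ^ j).re = (r ^ k) ^ 2 := by
        rw [← Complex.re_sum, ← Finset.mul_sum, ← hz, mul_comm, hck]
      have hbound : ∀ j ∈ Finset.range k, (c * z ^ j).re ≤ r ^ k * r ^ j := by
        intro j _
        calc (c * z ^ j).re ≤ ‖c * z ^ j‖ := Complex.re_le_norm _
        _ = r ^ k * r ^ j := by rw [norm_mul, hcabs, norm_pow, ← hrdef]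
      have hsum2 : ∑ j ∈ Finset.range k, (r ^ k * r ^ j) = (r ^ k) ^ 2 := by
        rw [← Finset.mul_sum, ← hρeq, sq]
      have hall : ∀ j ∈ Finset.range k, r ^ k * r ^ j - (c * z ^ j).re = 0 := by
        have hzero : ∑ j ∈ Finset.range k, (r ^ k * r ^ j - (c * z ^ j).re) = 0 := by
          rw [Finset.sum_sub_distrib, hsum, hsum2, sub_self]
        intro j hj
        exact (Finset.sum_eq_zero_iff_of_nonneg
          (fun i hi => sub_nonneg.mpr (hbound i hi))).mp hzero j hj
      have hrkpos : (0:ℝ) < r ^ k := by positivity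
      have h0 : c.re = r ^ k := by
        have h := hall 0 (Finset.mem_range.mpr (by omega))
        simp at h
        linarith
      have hcim : c.im = 0 := by
        have hnsq : c.re * c.re + c.im * c.im = (r ^ k) ^ 2 := by
          rw [← Complex.normSq_apply, ← Complex.sq_norm, hcabs]
        rw [h0] at hnsq
        nlinarith
      have h1 : (c * z).re = r ^ k * r := by
        have h := hall 1 (Finset.mem_range.mpr (by omega))
        rw [pow_one, pow_one] at h
        linarith
      have hzre : z.re = r := by
        have hre : (c * z).re = c.re * z.re - c.im * z.im := Complex.mul_re c z
        rw [h0, hcim, h1] at hre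
        have : r ^ k * r = r ^ k * z.re := by linarith
        exact (mul_left_cancel₀ (ne_of_gt hrkpos) this).symm
      have hzim : z.im = 0 := by
        have hsq : Complex.normSq z = r * r := by
          rw [← Complex.sq_norm, ← hrdef]; ring
        rw [Complex.normSq_apply, hzre] at hsq
        nlinarith
      exact hzρ (Complex.ext hzre hzim)
    · -- 1 < r < ρ : contradiction via 2 r^k - r^(k+1) > 1
      have hSr : r ^ k < ∑ j ∈ Finset.range k, r ^ j := by
        have := kbon_key k (by omega) hr1.le hrρ'
        rw [hρeq] at this
        have h1 : (0:ℝ) < ρ ^ k := by positivity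
        nlinarith
      have hg : r ^ (k+1) - 2 * r ^ k + 1 < 0 := by
        have h := geom_sum_mul r k
        have hfac : r ^ (k+1) - 2 * r ^ k + 1
            = (r - 1) * (r ^ k - ∑ j ∈ Finset.range k, r ^ j) := by
          rw [pow_succ]; linear_combination h
        rw [hfac]
        exact mul_neg_of_pos_of_neg (by linarith) (by linarith)
      have h2r : 2 - r ≤ ‖2 - z‖ := by
        have h := norm_add_le (2 - z) z
        simp only [sub_add_cancel] at h
        have h2 : ‖(2:ℂ)‖ = 2 := by simp
        rw [h2] at h
        linarith
      have hrkpos : (0:ℝ) < r ^ k := by positivity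
      have hmul : r ^ k * (2 - r) ≤ 1 := by
        calc r ^ k * (2 - r) ≤ r ^ k * ‖2 - z‖ :=
              mul_le_mul_of_nonneg_left h2r hrkpos.le
        _ = 1 := habs
      nlinarith [hmul, hg, pow_succ r k]
end
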